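/- In the pointwise r-gather algorithm, for every point p, if R_i >= rho_r(P,p), then p belongs to some cluster at the end of phase i; consequently, in the final output every point p is at distance at most 4*beta*C*rho_r(p) from its assigned center. -/

import Mathlib

/-- `u` and `v` are within graph distance `k` in `G`. -/
def withinDist {V : Type*} (G : SimpleGraph V) (k : ℕ) (u v : V) : Prop :=
  ∃ w : G.Walk u v, w.length ≤ k

/-- The subgraph of the `k`-th power of `G` induced by the vertex set `A`. -/
def inducedPower {V : Type*} (G : SimpleGraph V) (A : Set V) (k : ℕ) : SimpleGraph V where
  Adj u v := u ≠ v ∧ u ∈ A ∧ v ∈ A ∧ withinDist G k u v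
  symm := ⟨by
    rintro u v ⟨h1, h2, h3, w, hw⟩
    exact ⟨h1.symm, h3, h2, w.reverse, by simpa using hw⟩⟩
  loopless := ⟨by rintro u ⟨h1, -⟩; exact h1 rfl⟩

/-- The distance from `p` to its `r`-th nearest neighbor in `P`. -/
noncomputable def rhoNN {X : Type*} [MetricSpace X] (P : Finset X) (r : ℕ) (p : X) : ℝ :=
  sInf {R : ℝ | 0 ≤ R ∧ r ≤ (P.filter fun q => dist p q ≤ R).card}

lemma walk_dist {X : Type*} [MetricSpace X] {G : SimpleGraph X} {D : ℝ}
    (hG : ∀ u v, G.Adj u v → dist u v ≤ D) :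
    ∀ {u v : X} (w : G.Walk u v), dist u v ≤ w.length * D := by
  intro u v w
  induction w with
  | nil => simp
  | cons h w ih =>
    calc dist _ _ ≤ dist _ _ + dist _ _ := dist_triangle _ _ _
    _ ≤ D + w.length * D := add_le_add (hG _ _ h) ih
    _ = _ := by push_cast [SimpleGraph.Walk.length_cons]; ring

lemma rho_set_nonempty {X : Type*} [MetricSpace X] (P : Finset X) (r : ℕ) (p : X)
    (hr : 1 ≤ r) (hcard : r ≤ P.card) :
    {R : ℝ | 0 ≤ R ∧ r ≤ (P.filter fun q => dist p q ≤ R).card}.Nonempty := by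
  have hne : P.Nonempty := Finset.card_pos.mp (lt_of_lt_of_le (by omega) hcard)
  refine ⟨P.sup' hne (dist p), ?_, ?_⟩
  · obtain ⟨q, hq⟩ := hne
    exact le_trans dist_nonneg (Finset.le_sup' _ hq)
  · have : P.filter (fun q => dist p q ≤ P.sup' hne (dist p)) = P := by
      apply Finset.filter_true_of_mem
      intro q hq; exact Finset.le_sup' _ hq
    rw [this]; exact hcard

lemma rho_nonneg {X : Type*} [MetricSpace X] (P : Finset X) (r : ℕ) (p : X)
    (hr : 1 ≤ r) (hcard : r ≤ P.card) : 0 ≤ rhoNN P r p :=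
  le_csInf (rho_set_nonempty P r p hr hcard) (fun _ h => h.1)

lemma rho_bddBelow {X : Type*} [MetricSpace X] (P : Finset X) (r : ℕ) (p : X) :
    BddBelow {R : ℝ | 0 ≤ R ∧ r ≤ (P.filter fun q => dist p q ≤ R).card} :=
  ⟨0, fun _ h => h.1⟩

lemma rho_mem {X : Type*} [MetricSpace X] (P : Finset X) (r : ℕ) (p : X)
    (hr : 1 ≤ r) (hcard : r ≤ P.card) :
    r ≤ (P.filter fun q => dist p q ≤ rhoNN P r p).card := by
  set S := {R : ℝ | 0 ≤ R ∧ r ≤ (P.filter fun q => dist p q ≤ R).card} with hS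
  set ρ := rhoNN P r p with hρ
  by_contra h
  push_neg at h
  classical
  set T := P.filter (fun q => ¬ dist p q ≤ ρ) with hT
  have hTne : T.Nonempty := by
    rcases Finset.eq_empty_or_nonempty T with he | hne
    · exfalso
      have : P.filter (fun q => dist p q ≤ ρ) = P := by
        apply Finset.filter_true_of_mem
        intro q hq
        by_contra hc
        exact Finset.notMem_empty q (he ▸ Finset.mem_filter.mpr ⟨hq, hc⟩)
      rw [this] at h; omega
    · exact hne
  set ε := T.inf' hTne (fun q => dist p q) with hε
  have hρε : ρ < ε := by
    apply lt_of_lt_of_le ?_ le_rfl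
    obtain ⟨q, hq, hq2⟩ := Finset.exists_mem_eq_inf' hTne (fun q => dist p q)
    rw [hε, hq2]
    exact lt_of_not_ge (Finset.mem_filter.mp hq).2
  have hlb : ∀ R ∈ S, ε ≤ R := by
    intro R hR
    by_contra hc
    push_neg at hc
    have hsub : P.filter (fun q => dist p q ≤ R) ⊆ P.filter (fun q => dist p q ≤ ρ) := by
      intro q hq
      rw [Finset.mem_filter] at hq ⊢
      refine ⟨hq.1, ?_⟩
      by_contra hc2
      have : q ∈ T := Finset.mem_filter.mpr ⟨hq.1, hc2⟩
      have := Finset.inf'_le (fun q => dist p q) this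
      linarith [hq.2]
    have := Finset.card_le_card hsub
    have := hR.2
    omega
  have : ε ≤ ρ := le_csInf (rho_set_nonempty P r p hr hcard) hlb
  linarith

lemma rho_delta {X : Type*} [MetricSpace X] (P : Finset X) (r : ℕ) (p : X) (δ : ℝ)
    (hr2 : 2 ≤ r) (hcard : r ≤ P.card) (hp : p ∈ P)
    (hmin : ∀ x ∈ P, ∀ q ∈ P, x ≠ q → δ ≤ dist x q) :
    δ ≤ rhoNN P r p := by
  apply le_csInf (rho_set_nonempty P r p (by omega) hcard)
  rintro R ⟨hR0, hRr⟩
  have h1 : 1 < (P.filter fun q => dist p q ≤ R).card := by omega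
  obtain ⟨q, hq, hqp⟩ := Finset.exists_mem_ne h1 p
  rw [Finset.mem_filter] at hq
  exact le_trans (hmin p hp q hq.1 (Ne.symm hqp)) hq.2


open Classical in
/-- Pointwise `r`-gather algorithm (Algorithm 4), pointwise guarantee: if
`R_i = 2^i·δ ≥ ρ_r(P,p)` then `p` is clustered by the end of phase `i`; consequently
every clustered point `p` is at distance at most `4·β·C·ρ_r(P,p)` from its center. -/
theorem stmt13 {X : Type*} [MetricSpace X]
    (P : Finset X) (r : ℕ) (hr : 1 ≤ r)
    (C : ℝ) (hC : 1 ≤ C) (β : ℕ) (hβ : 1 ≤ β) (δ : ℝ) (hδ : 0 < δ)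
    (hr2 : 2 ≤ r) (hcard : r ≤ P.card)
    (hmin : ∀ p ∈ P, ∀ q ∈ P, p ≠ q → δ ≤ dist p q)
    (G : ℕ → SimpleGraph X)
    (c : ℕ → X → Option X)
    (Pp Ppp Pppp : ℕ → Finset X) (S : ℕ → Finset X)
    -- `G i` is a `C`-approximate `(R_i, r)`-near neighbor graph of `P`
    (hGP : ∀ i p q, (G i).Adj p q → p ∈ P ∧ q ∈ P)
    (hG1 : ∀ i p q, (G i).Adj p q → dist p q ≤ C * (2 ^ i * δ))
    (hG2 : ∀ i, ∀ p ∈ P,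
      r ≤ (P.filter fun q => (G i).Adj p q ∨ q = p).card ∨
      ∀ q ∈ P, dist p q ≤ 2 ^ i * δ → ((G i).Adj p q ∨ q = p))
    -- `P'_i`: vertices with at least `r` vertices in their closed `G i`-neighborhood
    (hPp : ∀ i, Pp i = P.filter fun p =>
      r ≤ (P.filter fun q => (G i).Adj p q ∨ q = p).card)
    -- `P''_i`: vertices of `P'_i` whose closed neighborhood is entirely unclustered
    (hPpp : ∀ i, Ppp i = (Pp i).filter fun p =>
      ∀ q ∈ P, ((G i).Adj p q ∨ q = p) → c i q = Option.none)
    -- `S i` is a `β`-ruling set of `(G_i²)[P''_i]`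
    (hS1 : ∀ i, S i ⊆ Ppp i)
    (hS2 : ∀ i, ∀ s ∈ S i, ∀ s' ∈ S i, s ≠ s' →
      ¬ (inducedPower (G i) (↑(Ppp i)) 2).Adj s s')
    (hS3 : ∀ i, ∀ p ∈ Ppp i, ∃ s ∈ S i,
      withinDist (inducedPower (G i) (↑(Ppp i)) 2) β p s)
    -- `P'''_i`: unclustered points at `G i`-distance at most `2β` from `S i`
    (hPppp : ∀ i, Pppp i = P.filter fun p =>
      c i p = Option.none ∧ ∃ s ∈ S i, withinDist (G i) (2 * β) p s)
    -- no point is clustered initially, and points outside `P` are never clustered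
    (hinit : ∀ p, c 0 p = Option.none)
    (hout : ∀ i p, p ∉ P → c i p = Option.none)
    -- phase `i`: each point of `S i` becomes the center of a new cluster
    (hU1 : ∀ i, ∀ s ∈ S i, c (i + 1) s = some s)
    -- each point of `P'''_i` joins the cluster of a closest member of `S i`
    (hU2 : ∀ i, ∀ p ∈ Pppp i, ∃ s ∈ S i, c (i + 1) p = some s ∧
      withinDist (G i) (2 * β) p s ∧
      ∀ s' ∈ S i, ∀ m : ℕ, withinDist (G i) m p s' → withinDist (G i) m p s)
    -- each unclustered point of `P'_i \ P'''_i` joins an adjacent existing cluster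
    (hU3 : ∀ i, ∀ p ∈ Pp i, c i p = Option.none → p ∉ Pppp i →
      ∃ q ∈ P, (G i).Adj p q ∧ (c i q).isSome ∧ c (i + 1) p = c i q)
    -- already clustered points keep their centers
    (hU4 : ∀ i p s, c i p = some s → c (i + 1) p = some s)
    -- no other point is clustered in phase `i`
    (hU5 : ∀ i p, c i p = Option.none → p ∉ Pppp i → p ∉ Pp i →
      c (i + 1) p = Option.none) :
    (∀ i, ∀ p ∈ P, rhoNN P r p ≤ 2 ^ i * δ → (c (i + 1) p).isSome) ∧
    (∀ i, ∀ p ∈ P, ∀ s, c i p = some s → dist p s ≤ 4 * β * C * rhoNN P r p) := by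
  classical
  have hC0 : (0:ℝ) ≤ C := le_trans zero_le_one hC
  have hβ1 : (1:ℝ) ≤ (β:ℝ) := by exact_mod_cast hβ
  have hβ0 : (0:ℝ) ≤ (β:ℝ) := by linarith
  -- persistence
  have pers : ∀ p s j k, j ≤ k → c j p = some s → c k p = some s := by
    intro p s j k hjk
    induction k, hjk using Nat.le_induction with
    | base => exact id
    | succ k hk ih => intro h; exact hU4 k p s (ih h)
  -- Part 1
  have part1 : ∀ i, ∀ p ∈ P, rhoNN P r p ≤ 2 ^ i * δ → (c (i + 1) p).isSome := by
    intro i p hp hρ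
    cases hcp : c i p with
    | some s => rw [hU4 i p s hcp]; rfl
    | none =>
      have hPpi : p ∈ Pp i := by
        rw [hPp i, Finset.mem_filter]
        refine ⟨hp, ?_⟩
        have hfilter : r ≤ (P.filter fun q => dist p q ≤ 2 ^ i * δ).card := by
          have h1 := rho_mem P r p hr hcard
          have hsub : (P.filter fun q => dist p q ≤ rhoNN P r p) ⊆
              (P.filter fun q => dist p q ≤ 2 ^ i * δ) := by
            intro q hq; rw [Finset.mem_filter] at hq ⊢
            exact ⟨hq.1, le_trans hq.2 hρ⟩
          exact le_trans h1 (Finset.card_le_card hsub)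
        rcases hG2 i p hp with h | h
        · exact h
        · refine le_trans hfilter (Finset.card_le_card ?_)
          intro q hq; rw [Finset.mem_filter] at hq ⊢
          exact ⟨hq.1, h q hq.1 hq.2⟩
      by_cases hP4 : p ∈ Pppp i
      · obtain ⟨s, hs, hcs, -⟩ := hU2 i p hP4
        rw [hcs]; rfl
      · obtain ⟨q, hq, -, hqs, hcq⟩ := hU3 i p hPpi hcp hP4
        rw [hcq]; exact hqs
  -- Invariant: a point clustered at time i is within β·C·2^i·δ of its center
  have hδ0 : (0:ℝ) ≤ δ := le_of_lt hδ
  have inv : ∀ i p s, c i p = some s → dist p s ≤ (β:ℝ) * C * (2 ^ i * δ) := by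
    intro i
    induction i with
    | zero => intro p s h; rw [hinit p] at h; exact absurd h (by simp)
    | succ i ih =>
      intro p s h
      have hD : ∀ u v, (G i).Adj u v → dist u v ≤ C * (2 ^ i * δ) := hG1 i
      have hD0 : (0:ℝ) ≤ C * (2 ^ i * δ) := by positivity
      cases hcp : c i p with
      | some s' =>
        have := hU4 i p s' hcp
        rw [h] at this
        obtain rfl : s = s' := by injection this
        calc dist p s ≤ (β:ℝ) * C * (2 ^ i * δ) := ih p s hcp
        _ ≤ (β:ℝ) * C * (2 ^ (i+1) * δ) := by
            have h2 : (2:ℝ) ^ i * δ ≤ 2 ^ (i+1) * δ := by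
              have : (2:ℝ) ^ i ≤ 2 ^ (i+1) :=
                pow_le_pow_right₀ (by norm_num) (by omega)
              nlinarith
            exact mul_le_mul_of_nonneg_left h2 (mul_nonneg hβ0 hC0)
      | none =>
        have hpP : p ∈ P := by
          by_contra hnp
          rw [hout (i+1) p hnp] at h
          exact absurd h (by simp)
        by_cases hP4 : p ∈ Pppp i
        · obtain ⟨s', hs', hcs, ⟨w, hw⟩, -⟩ := hU2 i p hP4
          rw [h] at hcs
          obtain rfl : s = s' := by injection hcs
          have hwd := walk_dist hD w
          have hwl : (w.length : ℝ) ≤ 2 * β := by exact_mod_cast hw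
          calc dist p s ≤ (w.length : ℝ) * (C * (2 ^ i * δ)) := hwd
          _ ≤ (2 * β) * (C * (2 ^ i * δ)) := by nlinarith
          _ = (β:ℝ) * C * (2 ^ (i+1) * δ) := by ring
        · by_cases hPpi : p ∈ Pp i
          · obtain ⟨q, hq, hadj, hqs, hcq⟩ := hU3 i p hPpi hcp hP4
            rw [h] at hcq
            have hciq : c i q = some s := hcq.symm
            have hqdist := ih q s hciq
            have hpq := hG1 i p q hadj
            calc dist p s ≤ dist p q + dist q s := dist_triangle p q s
            _ ≤ C * (2 ^ i * δ) + (β:ℝ) * C * (2 ^ i * δ) := add_le_add hpq hqdist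
            _ ≤ (β:ℝ) * C * (2 ^ (i+1) * δ) := by
                have : (2:ℝ) ^ (i+1) = 2 * 2 ^ i := by ring
                rw [this]
                nlinarith [pow_pos (by norm_num : (0:ℝ) < 2) i]
          · rw [hU5 i p hcp hP4 hPpi] at h
            exact absurd h (by simp)
  refine ⟨part1, ?_⟩
  -- Part 2
  intro i p hp s hcs
  have hρ0 : 0 ≤ rhoNN P r p := rho_nonneg P r p hr hcard
  have hρδ : δ ≤ rhoNN P r p := rho_delta P r p δ hr2 hcard hp hmin
  have hex : ∃ j, (c j p).isSome := ⟨i, by rw [hcs]; rfl⟩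
  have hjspec := Nat.find_spec hex
  have hji : Nat.find hex ≤ i := Nat.find_le (by rw [hcs]; rfl)
  have hj1 : 1 ≤ Nat.find hex := by
    rcases Nat.eq_zero_or_pos (Nat.find hex) with h0 | h0
    · rw [h0, hinit p] at hjspec; exact absurd hjspec (by simp)
    · omega
  obtain ⟨j', hjeq⟩ : ∃ j', Nat.find hex = j' + 1 := ⟨Nat.find hex - 1, by omega⟩
  rw [hjeq] at hjspec hji
  obtain ⟨s', hs'⟩ := Option.isSome_iff_exists.mp hjspec
  have hpers := pers p s' (j' + 1) i hji hs'
  rw [hcs] at hpers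
  obtain rfl : s = s' := by injection hpers
  have hinv := inv (j' + 1) p s hs'
  have hjmin : ¬ (c j' p).isSome := Nat.find_min hex (by rw [hjeq]; omega)
  have hkey : 2 ^ (j' + 1) * δ ≤ 4 * rhoNN P r p := by
    cases j' with
    | zero =>
      have h1 : (2:ℝ) ^ (0 + 1) = 2 := by norm_num
      rw [h1]; nlinarith
    | succ k =>
      have h2k : ¬ rhoNN P r p ≤ 2 ^ k * δ := by
        intro hc
        exact hjmin (part1 k p hp hc)
      push_neg at h2k
      have h1 : (2:ℝ) ^ (k + 1 + 1) = 4 * 2 ^ k := by ring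
      rw [h1]; nlinarith
  calc dist p s ≤ (β:ℝ) * C * (2 ^ (j' + 1) * δ) := hinv
  _ ≤ (β:ℝ) * C * (4 * rhoNN P r p) :=
      mul_le_mul_of_nonneg_left hkey (mul_nonneg hβ0 hC0)
  _ = 4 * β * C * rhoNN P r p := by ring
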